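/- Let n ≥ 1, let a₀ ∈ ℝⁿ, let U be an open neighborhood of a₀ in ℝⁿ, and let F : ℝⁿ → ℝⁿ be differentiable at every point of U, with derivative DF(x) (a continuous linear map ℝⁿ → ℝⁿ). Assume DF(a₀) is invertible, set h₀ = -(DF(a₀))⁻¹ (F(a₀)) and a₁ = a₀ + h₀, and let B̄ be the closed ball in ℝⁿ of radius ‖h₀‖ centered at a₁. Assume B̄ ⊆ U, that DF satisfies the Lipschitz condition ‖DF(u₁) - DF(u₂)‖ ≤ M·‖u₁ - u₂‖ (operator norm on the left) for all u₁, u₂ ∈ B̄, and that ‖F(a₀)‖ · ‖(DF(a₀))⁻¹‖² · M ≤ 1/2. Then there exists exactly one point x ∈ B̄ with F(x) = 0. -/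

import Mathlib

open Set Metric Topology Filter

/-- Mean value inequality with a linear bound on the derivative. -/
lemma kant_deriv_bound {E : Type*} [NormedAddCommGroup E] [NormedSpace ℝ E]
    (f f' : ℝ → E) (a b : ℝ)
    (hf : ∀ t ∈ Set.Icc (0:ℝ) 1, HasDerivAt f (f' t) t)
    (hbound : ∀ t ∈ Set.Icc (0:ℝ) 1, ‖f' t‖ ≤ a + b * t) :
    ‖f 1 - f 0‖ ≤ a + b / 2 := by
  have hB : ∀ t : ℝ, HasDerivAt (fun t : ℝ => a * t + b * t ^ 2 / 2) (a + b * t) t := by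
    intro t
    have h1 : HasDerivAt (fun t : ℝ => a * t) (a * 1) t := (hasDerivAt_id t).const_mul a
    have h2 : HasDerivAt (fun t : ℝ => b * t ^ 2 / 2) (b * (2 * t ^ 1) / 2) t :=
      ((hasDerivAt_pow 2 t).const_mul b).div_const 2
    have := h1.add h2
    exact this.congr_deriv (by ring)
  have key := image_norm_le_of_norm_deriv_right_le_deriv_boundary
    (f := fun t => f t - f 0) (f' := f') (a := 0) (b := 1)
    (fun t ht => ((hf t ht).sub_const (f 0)).continuousAt.continuousWithinAt)
    (fun t ht => ((hf t (Ico_subset_Icc_self ht)).sub_const (f 0)).hasDerivWithinAt)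
    (B := fun t => a * t + b * t ^ 2 / 2) (B' := fun t => a + b * t)
    (by simp) hB
    (fun t ht => hbound t (Ico_subset_Icc_self ht))
  have h1 := key (x := 1) (by norm_num)
  simpa using h1.trans_eq (by ring)

/-- Quadratic Taylor bound for a map with Lipschitz derivative on a convex set. -/
lemma kant_taylor {E : Type*} [NormedAddCommGroup E] [NormedSpace ℝ E]
    (F : E → E) (DF : E → E →L[ℝ] E) (s : Set E) (hs : Convex ℝ s)
    (hdiff : ∀ z ∈ s, HasFDerivAt F (DF z) z)
    (M : ℝ)
    (hlip : ∀ u₁ ∈ s, ∀ u₂ ∈ s, ‖DF u₁ - DF u₂‖ ≤ M * ‖u₁ - u₂‖)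
    (x h : E) (hx : x ∈ s) (hxh : x + h ∈ s) :
    ‖F (x + h) - F x - DF x h‖ ≤ M / 2 * ‖h‖ ^ 2 := by
  have hmem : ∀ t ∈ Set.Icc (0:ℝ) 1, x + t • h ∈ s := fun t ht => hs.add_smul_mem hx hxh ht
  have hf : ∀ t ∈ Set.Icc (0:ℝ) 1,
      HasDerivAt (fun t : ℝ => F (x + t • h) - t • (DF x h))
        (DF (x + t • h) h - DF x h) t := by
    intro t ht
    have hγ : HasDerivAt (fun t : ℝ => x + t • h) h t := by
      simpa using ((hasDerivAt_id t).smul_const h).const_add x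
    have h1 : HasDerivAt (fun t : ℝ => F (x + t • h)) (DF (x + t • h) h) t :=
      (hdiff _ (hmem t ht)).comp_hasDerivAt t hγ
    have h2 : HasDerivAt (fun t : ℝ => t • (DF x h)) (DF x h) t := by
      simpa using (hasDerivAt_id t).smul_const (DF x h)
    exact h1.sub h2
  have hbound : ∀ t ∈ Set.Icc (0:ℝ) 1,
      ‖DF (x + t • h) h - DF x h‖ ≤ 0 + (M * ‖h‖ ^ 2) * t := by
    intro t ht
    have e1 : DF (x + t • h) h - DF x h = (DF (x + t • h) - DF x) h := by simp
    rw [e1]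
    calc ‖(DF (x + t • h) - DF x) h‖ ≤ ‖DF (x + t • h) - DF x‖ * ‖h‖ :=
          (DF (x + t • h) - DF x).le_opNorm h
      _ ≤ (M * ‖x + t • h - x‖) * ‖h‖ := by
          have := hlip _ (hmem t ht) x hx
          exact mul_le_mul_of_nonneg_right this (norm_nonneg h)
      _ = 0 + (M * ‖h‖ ^ 2) * t := by
          have : ‖x + t • h - x‖ = t * ‖h‖ := by
            rw [add_sub_cancel_left, norm_smul, Real.norm_of_nonneg ht.1]
          rw [this]; ring
  have := kant_deriv_bound _ _ _ _ hf hbound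
  have e : (fun t : ℝ => F (x + t • h) - t • (DF x h)) 1
      - (fun t : ℝ => F (x + t • h) - t • (DF x h)) 0
      = F (x + h) - F x - DF x h := by
    simp; abel
  rw [e] at this
  exact this.trans_eq (by ring)

/-- Mean value bound with the averaged Lipschitz estimate. -/
lemma kant_mvt {E : Type*} [NormedAddCommGroup E] [NormedSpace ℝ E]
    (F : E → E) (DF : E → E →L[ℝ] E) (s : Set E) (hs : Convex ℝ s)
    (hdiff : ∀ z ∈ s, HasFDerivAt F (DF z) z)
    (M : ℝ) (hM : 0 ≤ M)
    (hlip : ∀ u₁ ∈ s, ∀ u₂ ∈ s, ‖DF u₁ - DF u₂‖ ≤ M * ‖u₁ - u₂‖)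
    (a₀ : E) (ha₀ : a₀ ∈ s) (L : E →L[ℝ] E) (hL : L = DF a₀)
    (x y : E) (hx : x ∈ s) (hy : y ∈ s) :
    ‖F y - F x - L (y - x)‖ ≤ M * ((‖x - a₀‖ + ‖y - a₀‖) / 2) * ‖y - x‖ := by
  set v := y - x with hv
  have hxv : x + v = y := by rw [hv]; abel
  have hmem : ∀ t ∈ Set.Icc (0:ℝ) 1, x + t • v ∈ s := fun t ht =>
    hs.add_smul_mem hx (hxv ▸ hy) ht
  set X := ‖x - a₀‖
  set Y := ‖y - a₀‖
  have hf : ∀ t ∈ Set.Icc (0:ℝ) 1,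
      HasDerivAt (fun t : ℝ => F (x + t • v) - t • (L v))
        (DF (x + t • v) v - L v) t := by
    intro t ht
    have hγ : HasDerivAt (fun t : ℝ => x + t • v) v t := by
      simpa using ((hasDerivAt_id t).smul_const v).const_add x
    have h1 : HasDerivAt (fun t : ℝ => F (x + t • v)) (DF (x + t • v) v) t :=
      (hdiff _ (hmem t ht)).comp_hasDerivAt t hγ
    have h2 : HasDerivAt (fun t : ℝ => t • (L v)) (L v) t := by
      simpa using (hasDerivAt_id t).smul_const (L v)
    exact h1.sub h2
  have hbound : ∀ t ∈ Set.Icc (0:ℝ) 1,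
      ‖DF (x + t • v) v - L v‖ ≤ M * X * ‖v‖ + (M * (Y - X) * ‖v‖) * t := by
    intro t ht
    have hseg : ‖x + t • v - a₀‖ ≤ (1 - t) * X + t * Y := by
      have e : x + t • v - a₀ = (1 - t) • (x - a₀) + t • (y - a₀) := by
        rw [hv]; module
      rw [e]
      calc ‖(1 - t) • (x - a₀) + t • (y - a₀)‖
          ≤ ‖(1 - t) • (x - a₀)‖ + ‖t • (y - a₀)‖ := norm_add_le _ _
        _ = (1 - t) * X + t * Y := by
            rw [norm_smul, norm_smul, Real.norm_of_nonneg (by linarith [ht.2]),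
              Real.norm_of_nonneg ht.1]
    have e1 : DF (x + t • v) v - L v = (DF (x + t • v) - DF a₀) v := by rw [hL]; simp
    rw [e1]
    calc ‖(DF (x + t • v) - DF a₀) v‖ ≤ ‖DF (x + t • v) - DF a₀‖ * ‖v‖ :=
          (DF (x + t • v) - DF a₀).le_opNorm v
      _ ≤ (M * ‖x + t • v - a₀‖) * ‖v‖ :=
          mul_le_mul_of_nonneg_right (hlip _ (hmem t ht) a₀ ha₀) (norm_nonneg v)
      _ ≤ (M * ((1 - t) * X + t * Y)) * ‖v‖ := by
          have := mul_le_mul_of_nonneg_left hseg hM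
          exact mul_le_mul_of_nonneg_right this (norm_nonneg v)
      _ = M * X * ‖v‖ + (M * (Y - X) * ‖v‖) * t := by ring
  have := kant_deriv_bound _ _ _ _ hf hbound
  have e : (fun t : ℝ => F (x + t • v) - t • (L v)) 1
      - (fun t : ℝ => F (x + t • v) - t • (L v)) 0
      = F y - F x - L v := by
    simp [hxv]; abel
  rw [e] at this
  exact this.trans_eq (by ring)

set_option maxHeartbeats 1000000 in
/-- **Kantorovich's Theorem (existence and uniqueness part).**
Let `F : ℝⁿ → ℝⁿ` be differentiable on an open neighborhood `U` of `a₀` with derivative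
`DF`, let `DF a₀` be invertible (given by the continuous linear equivalence `A`),
let `h₀ = -(DF a₀)⁻¹ (F a₀)`, `a₁ = a₀ + h₀`, and let `B̄` be the closed ball of radius
`‖h₀‖` about `a₁`.  If `B̄ ⊆ U`, `DF` is `M`-Lipschitz on `B̄` (operator norm), and
`‖F a₀‖ ⬝ ‖(DF a₀)⁻¹‖² ⬝ M ≤ 1/2`, then `F` has exactly one zero in `B̄`. -/
theorem kantorovich_exists_unique_zero
    (n : ℕ) (hn : 1 ≤ n)
    (F : EuclideanSpace ℝ (Fin n) → EuclideanSpace ℝ (Fin n))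
    (DF : EuclideanSpace ℝ (Fin n) →
      (EuclideanSpace ℝ (Fin n) →L[ℝ] EuclideanSpace ℝ (Fin n)))
    (a₀ : EuclideanSpace ℝ (Fin n)) (U : Set (EuclideanSpace ℝ (Fin n)))
    (hU : IsOpen U) (ha₀U : a₀ ∈ U)
    (hdiff : ∀ x ∈ U, HasFDerivAt F (DF x) x)
    (A : EuclideanSpace ℝ (Fin n) ≃L[ℝ] EuclideanSpace ℝ (Fin n))
    (hA : (A : EuclideanSpace ℝ (Fin n) →L[ℝ] EuclideanSpace ℝ (Fin n)) = DF a₀)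
    (h₀ a₁ : EuclideanSpace ℝ (Fin n))
    (hh₀ : h₀ = -(A.symm (F a₀)))
    (ha₁ : a₁ = a₀ + h₀)
    (M : ℝ)
    (hball : Metric.closedBall a₁ ‖h₀‖ ⊆ U)
    (hlip : ∀ u₁ ∈ Metric.closedBall a₁ ‖h₀‖, ∀ u₂ ∈ Metric.closedBall a₁ ‖h₀‖,
      ‖DF u₁ - DF u₂‖ ≤ M * ‖u₁ - u₂‖)
    (hkant : ‖F a₀‖ *
      ‖(A.symm : EuclideanSpace ℝ (Fin n) →L[ℝ] EuclideanSpace ℝ (Fin n))‖ ^ 2 * M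
        ≤ 1 / 2) :
    ∃! x, x ∈ Metric.closedBall a₁ ‖h₀‖ ∧ F x = 0 := by
  classical
  obtain ⟨r, hrdef⟩ : ∃ r' : ℝ, r' = ‖h₀‖ := ⟨_, rfl⟩
  obtain ⟨c, hcdef⟩ : ∃ c' : ℝ,
      c' = ‖(A.symm : EuclideanSpace ℝ (Fin n) →L[ℝ] EuclideanSpace ℝ (Fin n))‖ := ⟨_, rfl⟩
  obtain ⟨B, hBdef⟩ : ∃ B' : Set (EuclideanSpace ℝ (Fin n)),
      B' = Metric.closedBall a₁ r := ⟨_, rfl⟩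
  rw [← hrdef] at hball hlip ⊢
  rw [← hcdef] at hkant
  rw [← hBdef] at hball hlip ⊢
  have hc0 : 0 ≤ c := by rw [hcdef]; exact norm_nonneg _
  have hBconv : Convex ℝ B := hBdef ▸ convex_closedBall a₁ r
  have hdiffB : ∀ z ∈ B, HasFDerivAt F (DF z) z := fun z hz => hdiff z (hball hz)
  have ha₁a₀ : a₁ - a₀ = h₀ := by rw [ha₁]; abel
  have ha₀B : a₀ ∈ B := by
    rw [hBdef, Metric.mem_closedBall, dist_eq_norm]
    have e : a₀ - a₁ = -h₀ := by rw [ha₁]; abel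
    rw [e, norm_neg, hrdef]
  have ha₁B : a₁ ∈ B := by
    rw [hBdef]
    exact Metric.mem_closedBall_self (by rw [hrdef]; exact norm_nonneg _)
  have hAsymm_le : ∀ w, ‖A.symm w‖ ≤ c * ‖w‖ := by
    intro w
    rw [hcdef]
    exact (A.symm : EuclideanSpace ℝ (Fin n) →L[ℝ]
      EuclideanSpace ℝ (Fin n)).le_opNorm w
  have hAsymm_zero : ∀ w, A.symm w = 0 → w = 0 := by
    intro w hw
    have := A.apply_symm_apply w
    rw [hw] at this
    simpa using this.symm
  have hr_le : r ≤ c * ‖F a₀‖ := by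
    rw [hrdef, hh₀, norm_neg]; exact hAsymm_le _
  have hrnn : 0 ≤ r := by rw [hrdef]; exact norm_nonneg _
  rcases eq_or_lt_of_le hrnn with hr0 | hrpos
  · -- radius zero
    have hh0 : h₀ = 0 := norm_eq_zero.mp (hrdef ▸ hr0.symm)
    have hAF : A.symm (F a₀) = 0 := by
      rw [← neg_eq_zero, ← hh₀]; exact hh0
    have hFa₀ : F a₀ = 0 := hAsymm_zero _ hAF
    have ha₁a₀' : a₁ = a₀ := by rw [ha₁, hh0, add_zero]
    refine ⟨a₁, ⟨ha₁B, by rw [ha₁a₀']; exact hFa₀⟩, ?_⟩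
    rintro y ⟨hy, -⟩
    rw [hBdef, Metric.mem_closedBall, ← hr0] at hy
    exact dist_le_zero.mp hy
  · -- radius positive
    have hrne : r ≠ 0 := ne_of_gt hrpos
    have hM : 0 ≤ M := by
      have hmem2 : a₁ + EuclideanSpace.single (⟨0, hn⟩ : Fin n) r ∈ B := by
        rw [hBdef, Metric.mem_closedBall, dist_eq_norm, add_sub_cancel_left,
          EuclideanSpace.norm_single, Real.norm_of_nonneg hrpos.le]
      have h1 := hlip _ hmem2 a₁ ha₁B
      rw [add_sub_cancel_left, EuclideanSpace.norm_single,
        Real.norm_of_nonneg hrpos.le] at h1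
      nlinarith [norm_nonneg (DF (a₁ + EuclideanSpace.single (⟨0, hn⟩ : Fin n) r) - DF a₁)]
    have hcMr : c * M * r ≤ 1 / 2 := by
      nlinarith [mul_le_mul_of_nonneg_left hr_le (mul_nonneg hc0 hM)]
    -- boundary analysis
    have claim : ∀ w ∈ B, ‖w - a₀‖ ≤ 2 * r ∧ (‖w - a₀‖ = 2 * r → w = a₁ + h₀) := by
      intro w hw
      have hw1 : ‖w - a₁‖ ≤ r := by rwa [hBdef, Metric.mem_closedBall, dist_eq_norm] at hw
      have e : w - a₀ = (w - a₁) + h₀ := by rw [ha₁]; abel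
      have htr : ‖w - a₀‖ ≤ ‖w - a₁‖ + r := by
        rw [e, hrdef]; exact norm_add_le _ _
      refine ⟨by linarith, fun heq => ?_⟩
      have hnorm1 : ‖w - a₁‖ = r := by linarith
      have hsq1 := norm_add_sq_real (w - a₁) h₀
      have hsq2 := norm_sub_sq_real (w - a₁) h₀
      rw [← e, heq, hnorm1, ← hrdef] at hsq1
      rw [hnorm1, ← hrdef] at hsq2
      have h9 : ‖w - a₁ - h₀‖ = 0 := by nlinarith [norm_nonneg (w - a₁ - h₀)]
      have h10 : w - a₁ - h₀ = 0 := norm_eq_zero.mp h9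
      have e2 : w - (a₁ + h₀) = 0 := by rw [← h10]; abel
      exact sub_eq_zero.mp e2
    -- uniqueness
    have huniq : ∀ p ∈ B, ∀ q ∈ B, F p = 0 → F q = 0 → p = q := by
      intro p hp q hq hFp hFq
      by_contra hne
      have hmvt := kant_mvt F DF B hBconv hdiffB M hM hlip a₀ ha₀B
        (A : EuclideanSpace ℝ (Fin n) →L[ℝ] EuclideanSpace ℝ (Fin n)) hA p q hp hq
      rw [hFp, hFq] at hmvt
      have hAv : ‖(A : EuclideanSpace ℝ (Fin n) →L[ℝ] EuclideanSpace ℝ (Fin n)) (q - p)‖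
          ≤ M * ((‖p - a₀‖ + ‖q - a₀‖) / 2) * ‖q - p‖ := by
        have e : (0 : EuclideanSpace ℝ (Fin n)) - 0 -
            (A : EuclideanSpace ℝ (Fin n) →L[ℝ] EuclideanSpace ℝ (Fin n)) (q - p)
            = -((A : EuclideanSpace ℝ (Fin n) →L[ℝ] EuclideanSpace ℝ (Fin n)) (q - p)) := by
          abel
        rwa [e, norm_neg] at hmvt
      have hvpos : 0 < ‖q - p‖ := by
        rw [norm_pos_iff, sub_ne_zero]; exact fun h => hne h.symm
      have hbk0 : ‖q - p‖ ≤ c *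
          ‖(A : EuclideanSpace ℝ (Fin n) →L[ℝ] EuclideanSpace ℝ (Fin n)) (q - p)‖ := by
        have := hAsymm_le
          ((A : EuclideanSpace ℝ (Fin n) →L[ℝ] EuclideanSpace ℝ (Fin n)) (q - p))
        simpa using this
      have hbk : ‖q - p‖ ≤ c * (M * ((‖p - a₀‖ + ‖q - a₀‖) / 2) * ‖q - p‖) :=
        hbk0.trans (mul_le_mul_of_nonneg_left hAv hc0)
      have h1 : 1 ≤ c * M * ((‖p - a₀‖ + ‖q - a₀‖) / 2) := by
        by_contra hcon
        push_neg at hcon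
        nlinarith [mul_lt_mul_of_pos_right hcon hvpos]
      have hXle := (claim p hp).1
      have hYle := (claim q hq).1
      have hlt : ‖p - a₀‖ + ‖q - a₀‖ < 4 * r := by
        rcases hXle.lt_or_eq with h | h
        · linarith
        · rcases hYle.lt_or_eq with h' | h'
          · linarith
          · exact absurd (((claim p hp).2 h).trans ((claim q hq).2 h').symm) hne
      have hcMpos : 0 < c * M := by
        by_contra hcon
        push_neg at hcon
        nlinarith [norm_nonneg (p - a₀), norm_nonneg (q - a₀)]
      nlinarith [mul_lt_mul_of_pos_left hlt hcMpos]
    -- existence via the chord iteration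
    obtain ⟨z, hz0, hzs⟩ : ∃ z : ℕ → EuclideanSpace ℝ (Fin n),
        z 0 = a₀ ∧ ∀ k, z (k + 1) = z k - A.symm (F (z k)) :=
      ⟨fun k => Nat.rec a₀ (fun _ w => w - A.symm (F w)) k, rfl, fun _ => rfl⟩
    obtain ⟨d, hddef⟩ : ∃ d : ℕ → ℝ, ∀ k, d k = ‖A.symm (F (z k))‖ := ⟨_, fun _ => rfl⟩
    obtain ⟨S, hS0, hS⟩ : ∃ S : ℕ → ℝ, S 0 = 0 ∧ ∀ k, S (k + 1) = S k + d k :=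
      ⟨fun k => ∑ i ∈ Finset.range k, d i, by simp, fun k => Finset.sum_range_succ d k⟩
    obtain ⟨u, hudef⟩ : ∃ u : ℕ → ℝ, ∀ k, u k = r - S k / 2 := ⟨_, fun _ => rfl⟩
    have hd0 : d 0 = r := by
      rw [hddef 0, hz0, hrdef, hh₀, norm_neg]
    have hdnn : ∀ k, 0 ≤ d k := fun k => by rw [hddef k]; exact norm_nonneg _
    have hu : ∀ k, u (k + 1) = u k - d k / 2 := by
      intro k
      rw [hudef, hudef, hS]; ring
    have hSnn : ∀ k, 0 ≤ S k := by
      intro k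
      induction k with
      | zero => rw [hS0]
      | succ k ih => rw [hS k]; linarith [hdnn k]
    have hukr : ∀ k, u k ≤ r := by
      intro k
      rw [hudef]
      linarith [hSnn k]
    have hu0 : u 0 = r := by rw [hudef, hS0]; ring
    have hcMle : c * M ≤ 1 / (2 * r) := by
      rw [le_div_iff₀ (by linarith)]
      nlinarith [hcMr]
    have key : ∀ k, z k ∈ B ∧ ‖z k - a₀‖ ≤ 2 * (r - u k) ∧
        ‖z (k + 1) - a₁‖ ≤ r - 2 * u (k + 1) ∧ 0 ≤ u (k + 1) ∧ d k ≤ u k ^ 2 / r := by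
      intro k
      induction k with
      | zero =>
        have hz1 : z (0 + 1) = a₁ := by
          rw [hzs 0, hz0, ha₁, hh₀, sub_eq_add_neg]
        have hu1 : u (0 + 1) = r / 2 := by rw [hu 0, hu0, hd0]; ring
        refine ⟨hz0 ▸ ha₀B, ?_, ?_, ?_, ?_⟩
        · rw [hz0, hu0]; simp
        · rw [hz1, hu1]
          simp only [sub_self, norm_zero]
          linarith
        · rw [hu1]; linarith
        · rw [hd0, hu0]
          have : r ^ 2 / r = r := by field_simp [pow_two]
          linarith
      | succ k ih =>
        obtain ⟨hzkB, hzka₀, hzk1a₁, hu1nn, hdk⟩ := ih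
        have hzk1B : z (k + 1) ∈ B := by
          rw [hBdef, Metric.mem_closedBall, dist_eq_norm]
          linarith
        have huknn : 0 ≤ u k := by
          have h1 := hu k
          have h2 := hdnn k
          linarith
        -- analytic step
        have hset : z k + -(A.symm (F (z k))) = z (k + 1) := by
          rw [hzs k, sub_eq_add_neg]
        have htay := kant_taylor F DF B hBconv hdiffB M hlip (z k)
          (-(A.symm (F (z k)))) hzkB (by rw [hset]; exact hzk1B)
        have hAw : (A : EuclideanSpace ℝ (Fin n) →L[ℝ] EuclideanSpace ℝ (Fin n))
            (A.symm (F (z k))) = F (z k) := by simp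
        have hlin : F (z k) + DF (z k) (-(A.symm (F (z k))))
            = ((A : EuclideanSpace ℝ (Fin n) →L[ℝ] EuclideanSpace ℝ (Fin n)) - DF (z k))
              (A.symm (F (z k))) := by
          rw [ContinuousLinearMap.sub_apply, hAw, map_neg, sub_eq_add_neg]
        have hlinnorm : ‖F (z k) + DF (z k) (-(A.symm (F (z k))))‖
            ≤ M * ‖z k - a₀‖ * d k := by
          rw [hlin, hddef k]
          calc ‖((A : EuclideanSpace ℝ (Fin n) →L[ℝ] EuclideanSpace ℝ (Fin n)) - DF (z k))
                (A.symm (F (z k)))‖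
              ≤ ‖(A : EuclideanSpace ℝ (Fin n) →L[ℝ] EuclideanSpace ℝ (Fin n)) - DF (z k)‖
                * ‖A.symm (F (z k))‖ := ContinuousLinearMap.le_opNorm _ _
            _ ≤ (M * ‖a₀ - z k‖) * ‖A.symm (F (z k))‖ := by
                apply mul_le_mul_of_nonneg_right _ (norm_nonneg _)
                rw [hA]
                exact hlip a₀ ha₀B (z k) hzkB
            _ = M * ‖z k - a₀‖ * ‖A.symm (F (z k))‖ := by rw [norm_sub_rev]
        have hF1 : ‖F (z (k + 1))‖ ≤ M / 2 * d k ^ 2 + M * ‖z k - a₀‖ * d k := by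
          have e : F (z (k + 1)) =
              (F (z k + -(A.symm (F (z k)))) - F (z k) - DF (z k) (-(A.symm (F (z k)))))
              + (F (z k) + DF (z k) (-(A.symm (F (z k))))) := by
            rw [hset]; abel
          rw [e]
          have hnn : ‖-(A.symm (F (z k)))‖ = d k := by rw [norm_neg, hddef k]
          calc ‖_ + _‖ ≤ _ := norm_add_le _ _
            _ ≤ M / 2 * d k ^ 2 + M * ‖z k - a₀‖ * d k := by
                rw [hnn] at htay
                exact add_le_add (htay.trans_eq (by ring)) hlinnorm
        have hd1 : d (k + 1) ≤ c * (M / 2 * d k ^ 2 + M * ‖z k - a₀‖ * d k) := by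
          rw [hddef (k + 1)]
          exact (hAsymm_le _).trans (mul_le_mul_of_nonneg_left hF1 hc0)
        have hdknn := hdnn k
        have hZnn : (0:ℝ) ≤ ‖z k - a₀‖ := norm_nonneg _
        have hrdk : r * d k ≤ u k ^ 2 := by
          have h3 := (le_div_iff₀ hrpos).mp hdk
          linarith
        have hdknext : d (k + 1) ≤ u (k + 1) ^ 2 / r := by
          have e1 : c * (M / 2 * d k ^ 2 + M * ‖z k - a₀‖ * d k)
              = (c * M) * (d k * (‖z k - a₀‖ + d k / 2)) := by ring
          have e2 : (c * M) * (d k * (‖z k - a₀‖ + d k / 2))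
              ≤ (c * M) * (d k * (2 * (r - u k) + d k / 2)) := by
            apply mul_le_mul_of_nonneg_left _ (mul_nonneg hc0 hM)
            apply mul_le_mul_of_nonneg_left _ hdknn
            linarith
          have e3 : (c * M) * (d k * (2 * (r - u k) + d k / 2))
              ≤ (1 / (2 * r)) * (d k * (2 * (r - u k) + d k / 2)) := by
            apply mul_le_mul_of_nonneg_right hcMle
            have h4 := hukr k
            nlinarith
          have e4 : d k * (2 * (r - u k) + d k / 2) ≤ 2 * (u k - d k / 2) ^ 2 := by
            nlinarith [hrdk]
          have e5 : (1 / (2 * r)) * (d k * (2 * (r - u k) + d k / 2))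
              ≤ (u k - d k / 2) ^ 2 / r := by
            calc (1 / (2 * r)) * (d k * (2 * (r - u k) + d k / 2))
                ≤ (1 / (2 * r)) * (2 * (u k - d k / 2) ^ 2) :=
                  mul_le_mul_of_nonneg_left e4 (by positivity)
              _ = (u k - d k / 2) ^ 2 / r := by
                  rw [one_div_mul_eq_div,
                    div_eq_div_iff (by linarith : (0:ℝ) < 2 * r).ne' hrne]
                  ring
          have e6 : u (k + 1) = u k - d k / 2 := hu k
          rw [e6]
          calc d (k + 1) ≤ c * (M / 2 * d k ^ 2 + M * ‖z k - a₀‖ * d k) := hd1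
            _ = (c * M) * (d k * (‖z k - a₀‖ + d k / 2)) := e1
            _ ≤ (c * M) * (d k * (2 * (r - u k) + d k / 2)) := e2
            _ ≤ (1 / (2 * r)) * (d k * (2 * (r - u k) + d k / 2)) := e3
            _ ≤ (u k - d k / 2) ^ 2 / r := e5
        refine ⟨hzk1B, ?_, ?_, ?_, hdknext⟩
        · have htr : ‖z (k + 1) - a₀‖ ≤ ‖z (k + 1) - a₁‖ + ‖a₁ - a₀‖ := by
            have e : z (k + 1) - a₀ = (z (k + 1) - a₁) + (a₁ - a₀) := by abel
            rw [e]; exact norm_add_le _ _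
          rw [ha₁a₀, ← hrdef] at htr
          linarith
        · have htr : ‖z (k + 1 + 1) - a₁‖ ≤ ‖z (k + 1 + 1) - z (k + 1)‖ + ‖z (k + 1) - a₁‖ := by
            have e : z (k + 1 + 1) - a₁ = (z (k + 1 + 1) - z (k + 1)) + (z (k + 1) - a₁) := by
              abel
            rw [e]; exact norm_add_le _ _
          have hdd : ‖z (k + 1 + 1) - z (k + 1)‖ = d (k + 1) := by
            rw [hzs (k + 1), hddef (k + 1)]
            have e : z (k + 1) - A.symm (F (z (k + 1))) - z (k + 1)
                = -(A.symm (F (z (k + 1)))) := by abel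
            rw [e, norm_neg]
          have e7 := hu (k + 1)
          rw [hdd] at htr
          linarith
        · have e7 := hu (k + 1)
          have h8 : r * d (k + 1) ≤ u (k + 1) ^ 2 := by
            have h5 := (le_div_iff₀ hrpos).mp hdknext
            linarith
          have h9 := hukr (k + 1)
          have h10 : u (k + 1) ^ 2 ≤ r * u (k + 1) := by
            rw [pow_two]
            exact mul_le_mul_of_nonneg_right h9 hu1nn
          have h11 : d (k + 1) ≤ u (k + 1) :=
            le_of_mul_le_mul_left (by linarith) hrpos
          linarith
    -- convergence of the iteration
    have hSmono : Monotone S := monotone_nat_of_le_succ fun k => by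
      rw [hS k]; linarith [hdnn k]
    have hSle : ∀ k, S k ≤ 2 * r := by
      intro k
      have h1 := (key k).2.2.2.1
      have h2 := hS k
      have h3 := hudef (k + 1)
      have h4 := hdnn k
      rw [h3] at h1
      linarith
    have hbdd : BddAbove (Set.range S) := ⟨2 * r, by rintro _ ⟨k, rfl⟩; exact hSle k⟩
    have hStend : Filter.Tendsto S Filter.atTop (𝓝 (⨆ k, S k)) :=
      tendsto_atTop_ciSup hSmono hbdd
    have hSleL : ∀ k, S k ≤ ⨆ k, S k := fun k => le_ciSup hbdd k
    have hdistz : ∀ m n' : ℕ, m ≤ n' → dist (z m) (z n') ≤ S n' - S m := by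
      intro m n' hmn
      have h1 := dist_le_Ico_sum_dist z hmn
      have h2 : ∀ i, dist (z i) (z (i + 1)) = d i := by
        intro i
        rw [dist_eq_norm, hzs i, hddef i]
        have e : z i - (z i - A.symm (F (z i))) = A.symm (F (z i)) := by abel
        rw [e]
      have h3 : ∀ m', S m' = ∑ i ∈ Finset.range m', d i := by
        intro m'
        induction m' with
        | zero => rw [hS0]; simp
        | succ k ih => rw [hS k, Finset.sum_range_succ, ih]
      calc dist (z m) (z n') ≤ ∑ i ∈ Finset.Ico m n', dist (z i) (z (i + 1)) := h1
        _ = ∑ i ∈ Finset.Ico m n', d i := Finset.sum_congr rfl fun i _ => h2 i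
        _ = S n' - S m := by rw [Finset.sum_Ico_eq_sub d hmn, ← h3, ← h3]
    have hcauchy : CauchySeq z := by
      apply cauchySeq_of_le_tendsto_0 (fun N => (⨆ k, S k) - S N)
      · intro m' n' N hm hn
        rcases le_total m' n' with h | h
        · exact (hdistz m' n' h).trans (by linarith [hSleL n', hSmono hm])
        · rw [dist_comm]
          exact (hdistz n' m' h).trans (by linarith [hSleL m', hSmono hn])
      · have := hStend.const_sub (⨆ k, S k)
        simpa using this
    obtain ⟨p, hp⟩ := cauchySeq_tendsto_of_complete hcauchy
    have hpB : p ∈ B := by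
      rw [hBdef]
      refine Metric.isClosed_closedBall.mem_of_tendsto hp
        (Filter.Eventually.of_forall fun k => ?_)
      have := (key k).1
      rwa [hBdef] at this
    have hd_to0 : Filter.Tendsto d Filter.atTop (𝓝 0) := by
      have h1 : Filter.Tendsto (fun k => S (k + 1)) Filter.atTop (𝓝 (⨆ k, S k)) :=
        hStend.comp (Filter.tendsto_add_atTop_nat 1)
      have h2 := h1.sub hStend
      have e : (fun k => S (k + 1) - S k) = d := funext fun k => by rw [hS k]; ring
      rw [e] at h2
      simpa using h2
    have hd_toA : Filter.Tendsto d Filter.atTop (𝓝 ‖A.symm (F p)‖) := by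
      have hc1 : ContinuousAt F p := (hdiff p (hball hpB)).continuousAt
      have hc2 : Filter.Tendsto (fun k => F (z k)) Filter.atTop (𝓝 (F p)) :=
        hc1.tendsto.comp hp
      have hc3 : Filter.Tendsto (fun k => A.symm (F (z k))) Filter.atTop
          (𝓝 (A.symm (F p))) := (A.symm.continuous.tendsto _).comp hc2
      have hc4 := (continuous_norm.tendsto _).comp hc3
      have e : (fun k => ‖A.symm (F (z k))‖) = d := funext fun k => (hddef k).symm
      rw [← e]
      exact hc4
    have hnorm0 : ‖A.symm (F p)‖ = 0 := tendsto_nhds_unique hd_toA hd_to0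
    have hFp : F p = 0 := hAsymm_zero _ (norm_eq_zero.mp hnorm0)
    exact ⟨p, ⟨hpB, hFp⟩, fun y hy => huniq y hy.1 p hpB hy.2 hFp⟩
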